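/- For every integer k ≥ 3, there exist finite sets of integers A and B with |A| = |B| = k that are not affinely equivalent but satisfy |hA| = |hB| for all h ≥ 1. -/

import Mathlib

open Pointwise

/-- The h-fold sumset of a finite set of integers. -/
def hfold (A : Finset ℤ) : ℕ → Finset ℤ
  | 0 => {0}
  | n + 1 => A + hfold A n

/-- A and B are affinely equivalent: B = {λx + μ : x ∈ A} for rationals λ ≠ 0, μ. -/
def AffinelyEquivalent (A B : Finset ℤ) : Prop :=
  ∃ lam mu : ℚ, lam ≠ 0 ∧
    B.image (fun x : ℤ => (x : ℚ)) = A.image (fun x : ℤ => lam * (x : ℚ) + mu)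

lemma hfold_succ (A : Finset ℤ) (n : ℕ) : hfold A (n+1) = A + hfold A n := rfl
lemma hfold_zero (A : Finset ℤ) : hfold A 0 = 0 := rfl
lemma hfold_one (A : Finset ℤ) : hfold A 1 = A := by
  rw [hfold_succ, hfold_zero, add_zero]

lemma mem_addF {A S : Finset ℤ} {x : ℤ} : x ∈ A + S ↔ ∃ a ∈ A, x - a ∈ S := by
  rw [Finset.mem_add]
  constructor
  · rintro ⟨a, ha, s, hs, rfl⟩; exact ⟨a, ha, by simpa using hs⟩
  · rintro ⟨a, ha, h⟩; exact ⟨a, ha, x - a, h, by ring⟩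

lemma hfold_add (A : Finset ℤ) (m n : ℕ) : hfold A (m + n) = hfold A m + hfold A n := by
  induction m with
  | zero => rw [Nat.zero_add, hfold_zero, zero_add]
  | succ m ih => rw [Nat.succ_add, hfold_succ, ih, hfold_succ, add_assoc]

/-! ### k = 3 -/

noncomputable def D3 (n : ℤ) : Finset ℤ :=
  Finset.Icc 0 (5*n+3) ∪ Finset.Icc (5*n+5) (5*n+7) ∪ Finset.Icc (5*n+10) (5*n+11) ∪ {5*n+15}

noncomputable def E3 (n : ℤ) : Finset ℤ :=
  ({0, 2} : Finset ℤ) ∪ Finset.Icc 4 (5*n+7) ∪ Finset.Icc (5*n+9) (5*n+10) ∪ {5*n+12, 5*n+15}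

lemma descA3 : ∀ n : ℕ, hfold {0,1,5} (n+3) = D3 n := by
  intro n
  induction n with
  | zero => show hfold {0,1,5} 3 = D3 0; decide
  | succ m ih =>
    rw [show m+1+3 = (m+3)+1 by ring, hfold_succ, ih]
    ext x
    rw [mem_addF]
    simp only [Finset.mem_insert, Finset.mem_singleton, D3, Finset.mem_union, Finset.mem_Icc,
      or_and_right, exists_or, exists_eq_left]
    push_cast
    omega

lemma descB3 : ∀ n : ℕ, hfold {0,2,5} (n+3) = E3 n := by
  intro n
  induction n with
  | zero => show hfold {0,2,5} 3 = E3 0; decide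
  | succ m ih =>
    rw [show m+1+3 = (m+3)+1 by ring, hfold_succ, ih]
    ext x
    rw [mem_addF]
    simp only [Finset.mem_insert, Finset.mem_singleton, E3, Finset.mem_union, Finset.mem_Icc,
      or_and_right, exists_or, exists_eq_left]
    push_cast
    omega

lemma cardD3 (n : ℕ) : (D3 (n:ℤ)).card = 5*n+10 := by
  rw [D3]
  rw [Finset.card_union_of_disjoint (by
        rw [Finset.disjoint_left]; intro a ha hb
        simp only [Finset.mem_union, Finset.mem_Icc, Finset.mem_singleton] at ha hb; omega)]
  rw [Finset.card_union_of_disjoint (by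
        rw [Finset.disjoint_left]; intro a ha hb
        simp only [Finset.mem_union, Finset.mem_Icc, Finset.mem_singleton] at ha hb; omega)]
  rw [Finset.card_union_of_disjoint (by
        rw [Finset.disjoint_left]; intro a ha hb
        simp only [Finset.mem_union, Finset.mem_Icc, Finset.mem_singleton] at ha hb; omega)]
  simp only [Int.card_Icc, Finset.card_singleton]
  omega

lemma cardE3 (n : ℕ) : (E3 (n:ℤ)).card = 5*n+10 := by
  rw [E3]
  rw [Finset.card_union_of_disjoint (by
        rw [Finset.disjoint_left]; intro a ha hb
        simp only [Finset.mem_union, Finset.mem_Icc, Finset.mem_singleton, Finset.mem_insert] at ha hb; omega)]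
  rw [Finset.card_union_of_disjoint (by
        rw [Finset.disjoint_left]; intro a ha hb
        simp only [Finset.mem_union, Finset.mem_Icc, Finset.mem_singleton, Finset.mem_insert] at ha hb; omega)]
  rw [Finset.card_union_of_disjoint (by
        rw [Finset.disjoint_left]; intro a ha hb
        simp only [Finset.mem_union, Finset.mem_Icc, Finset.mem_singleton, Finset.mem_insert] at ha hb; omega)]
  rw [show ({5*(n:ℤ)+12, 5*(n:ℤ)+15} : Finset ℤ).card = 2 from by
        rw [Finset.card_insert_of_notMem (by simp), Finset.card_singleton]]
  simp only [Int.card_Icc]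
  rw [show (({0, 2} : Finset ℤ)).card = 2 from by decide]
  omega

/-! ### k = 4 -/

noncomputable def D4 (n : ℤ) : Finset ℤ := Finset.Icc 0 (5*n+7) ∪ {5*n+10}
noncomputable def E4 (n : ℤ) : Finset ℤ := ({0, 2} : Finset ℤ) ∪ Finset.Icc 4 (5*n+10)

lemma descA4 : ∀ n : ℕ, hfold {0,1,2,5} (n+2) = D4 n := by
  intro n
  induction n with
  | zero => show hfold {0,1,2,5} 2 = D4 0; decide
  | succ m ih =>
    rw [show m+1+2 = (m+2)+1 by ring, hfold_succ, ih]
    ext x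
    rw [mem_addF]
    simp only [Finset.mem_insert, Finset.mem_singleton, D4, Finset.mem_union, Finset.mem_Icc,
      or_and_right, exists_or, exists_eq_left]
    push_cast
    omega

lemma descB4 : ∀ n : ℕ, hfold {0,2,4,5} (n+2) = E4 n := by
  intro n
  induction n with
  | zero => show hfold {0,2,4,5} 2 = E4 0; decide
  | succ m ih =>
    rw [show m+1+2 = (m+2)+1 by ring, hfold_succ, ih]
    ext x
    rw [mem_addF]
    simp only [Finset.mem_insert, Finset.mem_singleton, E4, Finset.mem_union, Finset.mem_Icc,
      or_and_right, exists_or, exists_eq_left]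
    push_cast
    omega

lemma cardD4 (n : ℕ) : (D4 (n:ℤ)).card = 5*n+9 := by
  rw [D4]
  rw [Finset.card_union_of_disjoint (by
        rw [Finset.disjoint_left]; intro a ha hb
        simp only [Finset.mem_Icc, Finset.mem_singleton] at ha hb; omega)]
  simp only [Int.card_Icc, Finset.card_singleton]
  omega

lemma cardE4 (n : ℕ) : (E4 (n:ℤ)).card = 5*n+9 := by
  rw [E4]
  rw [Finset.card_union_of_disjoint (by
        rw [Finset.disjoint_left]; intro a ha hb
        simp only [Finset.mem_Icc, Finset.mem_singleton, Finset.mem_insert] at ha hb; omega)]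
  simp only [Int.card_Icc]
  rw [show (({0, 2} : Finset ℤ)).card = 2 from by decide]
  omega

/-! ### k = 5 -/

set_option maxRecDepth 40000 in
lemma k5_eq : ∀ j : ℕ, hfold {0,1,2,6,8} (j+3) = hfold {0,1,4,6,8} (j+3) := by
  have swap3 : ∀ X Y Z : Finset ℤ, (X + Y) + Z = Y + (X + Z) := fun X Y Z => by
    rw [← add_assoc, add_comm X Y, add_assoc]
  have F1 : hfold {0,1,4,6,8} 3 = hfold {0,1,2,6,8} 3 := by decide
  have F2 : hfold {0,1,2,6,8} 4 = hfold {0,1,4,6,8} 4 := by decide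
  have FAC : ({0,1,2,6,8} : Finset ℤ) + hfold {0,1,2,6,8} 3
      = ({0,1,4,6,8} : Finset ℤ) + hfold {0,1,2,6,8} 3 := by
    have h4 : hfold {0,1,2,6,8} (3+1) = hfold {0,1,4,6,8} (3+1) := F2
    rw [hfold_succ _ 3, hfold_succ _ 3, F1] at h4
    exact h4
  have Q : ∀ j : ℕ, hfold {0,1,2,6,8} j + hfold {0,1,2,6,8} 3
      = hfold {0,1,4,6,8} j + hfold {0,1,2,6,8} 3 := by
    intro j
    induction j with
    | zero => rfl
    | succ j ih =>
      rw [hfold_succ _ j, hfold_succ _ j, swap3, FAC,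
        ← swap3 ({0,1,4,6,8} : Finset ℤ) (hfold {0,1,2,6,8} j) (hfold {0,1,2,6,8} 3),
        add_assoc, ih, ← add_assoc]
  intro j
  rw [hfold_add, hfold_add, F1, Q j]

/-! ### generic k ≥ 6 -/

lemma step_interval (A : Finset ℤ) (m n : ℤ) (hsub : ∀ a ∈ A, 0 ≤ a ∧ a ≤ m)
    (h0 : (0:ℤ) ∈ A) (hmm : m ∈ A) (hn : m ≤ n) :
    A + Finset.Icc 0 n = Finset.Icc 0 (n + m) := by
  ext x
  rw [mem_addF]
  simp only [Finset.mem_Icc]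
  constructor
  · rintro ⟨a, ha, hs⟩
    have := hsub a ha
    omega
  · intro hx
    by_cases hxn : x ≤ n
    · exact ⟨0, h0, by omega⟩
    · exact ⟨m, hmm, by omega⟩

lemma twoErase (m t : ℤ) (h2 : 2 ≤ t) (hm : t ≤ m - 2) :
    ((Finset.Icc (0:ℤ) m).erase t) + ((Finset.Icc (0:ℤ) m).erase t)
      = Finset.Icc 0 (2*m) := by
  ext x
  rw [mem_addF]
  simp only [Finset.mem_erase, Finset.mem_Icc]
  constructor
  · rintro ⟨a, ha, hs⟩; omega
  · intro hx
    by_cases hxt : x = t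
    · exact ⟨1, by omega, by omega⟩
    · by_cases hxm : x ≤ m
      · exact ⟨x, by omega, by omega⟩
      · by_cases hxmt : x = m + t
        · exact ⟨m - 1, by omega, by omega⟩
        · exact ⟨m, by omega, by omega⟩

lemma descErase (m t : ℤ) (h2 : 2 ≤ t) (hm : t ≤ m - 2) :
    ∀ n : ℕ, hfold ((Finset.Icc (0:ℤ) m).erase t) (n+2) = Finset.Icc 0 (((n:ℤ)+2)*m) := by
  have hsub : ∀ a ∈ (Finset.Icc (0:ℤ) m).erase t, 0 ≤ a ∧ a ≤ m := by
    intro a ha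
    simp only [Finset.mem_erase, Finset.mem_Icc] at ha
    exact ha.2
  have h0 : (0:ℤ) ∈ (Finset.Icc (0:ℤ) m).erase t := by
    simp only [Finset.mem_erase, Finset.mem_Icc]; omega
  have hmm : m ∈ (Finset.Icc (0:ℤ) m).erase t := by
    simp only [Finset.mem_erase, Finset.mem_Icc]; omega
  intro n
  induction n with
  | zero =>
    rw [show (0:ℕ)+2 = 1+1 from rfl, hfold_succ, hfold_one, twoErase m t h2 hm]
    norm_num
  | succ n ih =>
    rw [show n+1+2 = (n+2)+1 by ring, hfold_succ, ih,
      step_interval _ m _ hsub h0 hmm (by nlinarith [Int.natCast_nonneg n])]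
    congr 1
    push_cast
    ring

/-- general affine inequivalence lemma -/
lemma not_affeq (A B : Finset ℤ) (m : ℤ) (hm : 0 < m)
    (h0A : (0:ℤ) ∈ A) (hmA : m ∈ A) (hAsub : ∀ a ∈ A, 0 ≤ a ∧ a ≤ m)
    (h0B : (0:ℤ) ∈ B) (hmB : m ∈ B) (hBsub : ∀ b ∈ B, 0 ≤ b ∧ b ≤ m)
    (hne : B ≠ A) (hne' : B ≠ A.image (fun a => m - a)) :
    ¬ AffinelyEquivalent A B := by
  rintro ⟨lam, mu, hlam, heq⟩
  have hmem : ∀ a ∈ A, ∃ b ∈ B, (b:ℚ) = lam * a + mu := by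
    intro a ha
    have h1 : lam * a + mu ∈ A.image (fun x : ℤ => lam * (x:ℚ) + mu) :=
      Finset.mem_image_of_mem _ ha
    rw [← heq] at h1
    simpa using h1
  have hmem' : ∀ b ∈ B, ∃ a ∈ A, lam * a + mu = (b:ℚ) := by
    intro b hb
    have h1 : (b:ℚ) ∈ B.image (fun x : ℤ => (x:ℚ)) := Finset.mem_image_of_mem _ hb
    rw [heq] at h1
    simpa using h1
  obtain ⟨b0, hb0, e0⟩ := hmem 0 h0A
  obtain ⟨b1, hb1, e1⟩ := hmem m hmA
  obtain ⟨a0, ha0, f0⟩ := hmem' 0 h0B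
  obtain ⟨a1, ha1, f1⟩ := hmem' m hmB
  have hb0' := hBsub b0 hb0
  have hb1' := hBsub b1 hb1
  have ha0' := hAsub a0 ha0
  have ha1' := hAsub a1 ha1
  -- move to ℚ
  have hmQ : (0:ℚ) < m := by exact_mod_cast hm
  have hmu1 : (0:ℚ) ≤ mu := by
    have : (0:ℚ) ≤ b0 := by exact_mod_cast hb0'.1
    push_cast at e0; linarith [e0]
  have hmu2 : mu ≤ (m:ℚ) := by
    have : (b0:ℚ) ≤ m := by exact_mod_cast hb0'.2
    push_cast at e0; linarith [e0]
  have hlm1 : (0:ℚ) ≤ lam * m + mu := by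
    have : (0:ℚ) ≤ b1 := by exact_mod_cast hb1'.1
    push_cast at e1; linarith [e1]
  have hlm2 : lam * m + mu ≤ (m:ℚ) := by
    have : (b1:ℚ) ≤ m := by exact_mod_cast hb1'.2
    push_cast at e1; linarith [e1]
  have ha0Q1 : (0:ℚ) ≤ (a0:ℚ) := by exact_mod_cast ha0'.1
  have ha0Q2 : (a0:ℚ) ≤ m := by exact_mod_cast ha0'.2
  have ha1Q1 : (0:ℚ) ≤ (a1:ℚ) := by exact_mod_cast ha1'.1
  have ha1Q2 : (a1:ℚ) ≤ m := by exact_mod_cast ha1'.2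
  have key : lam * ((a1:ℚ) - a0) = m := by
    have := f0; have := f1; push_cast at f0 f1; linarith [f0, f1]
  rcases lt_trichotomy lam 0 with hneg | hz | hpos
  · -- lam < 0 ; show lam = -1
    have hlge : -1 ≤ lam := by nlinarith
    have hd : (a1:ℚ) - a0 < 0 := by nlinarith
    have hdge : (a0:ℚ) - a1 ≤ m := by linarith
    have : lam = -1 := by nlinarith
    subst this
    -- from f1 : -a1 + mu = m ; a1 ≥ 0 ; mu ≤ m → a1 = 0, mu = m
    have hmuM : mu = (m:ℚ) := by push_cast at f1; linarith
    subst hmuM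
    apply hne'
    have himg : A.image (fun x : ℤ => (-1:ℚ) * (x:ℚ) + m)
        = (A.image (fun a => m - a)).image (fun x : ℤ => (x:ℚ)) := by
      rw [Finset.image_image]
      apply Finset.image_congr
      intro x hx
      simp only [Function.comp]
      push_cast
      ring
    rw [himg] at heq
    exact Finset.image_injective (fun x y h => by exact_mod_cast h) heq
  · exact hlam hz
  · -- lam > 0 ; show lam = 1
    have hlle : lam ≤ 1 := by nlinarith
    have hd : (0:ℚ) < (a1:ℚ) - a0 := by nlinarith
    have hdle : (a1:ℚ) - a0 ≤ m := by linarith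
    have : lam = 1 := by nlinarith
    subst this
    have hmu0 : mu = 0 := by push_cast at f0; linarith
    subst hmu0
    apply hne
    have himg : A.image (fun x : ℤ => (1:ℚ) * (x:ℚ) + 0)
        = A.image (fun x : ℤ => (x:ℚ)) := by
      apply Finset.image_congr
      intro x hx
      ring
    rw [himg] at heq
    exact Finset.image_injective (fun x y h => by exact_mod_cast h) heq

theorem stmt_5 (k : ℕ) (hk : 3 ≤ k) :
    ∃ A B : Finset ℤ, A.card = k ∧ B.card = k ∧ ¬ AffinelyEquivalent A B ∧
      ∀ h : ℕ, 1 ≤ h → (hfold A h).card = (hfold B h).card := by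
  rcases Nat.lt_or_ge k 6 with h6 | h6
  · interval_cases k
    · -- k = 3
      refine ⟨{0,1,5}, {0,2,5}, by decide, by decide, ?_, ?_⟩
      · exact not_affeq _ _ 5 (by norm_num) (by decide) (by decide) (by decide)
          (by decide) (by decide) (by decide) (by decide) (by decide)
      · intro h hh
        rcases h with _ | _ | _ | n
        · omega
        · decide
        · decide
        · rw [descA3 n, descB3 n, cardD3 n, cardE3 n]
    · -- k = 4
      refine ⟨{0,1,2,5}, {0,2,4,5}, by decide, by decide, ?_, ?_⟩
      · exact not_affeq _ _ 5 (by norm_num) (by decide) (by decide) (by decide)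
          (by decide) (by decide) (by decide) (by decide) (by decide)
      · intro h hh
        rcases h with _ | _ | n
        · omega
        · decide
        · rw [descA4 n, descB4 n, cardD4 n, cardE4 n]
    · -- k = 5
      refine ⟨{0,1,2,6,8}, {0,1,4,6,8}, by decide, by decide, ?_, ?_⟩
      · exact not_affeq _ _ 8 (by norm_num) (by decide) (by decide) (by decide)
          (by decide) (by decide) (by decide) (by decide) (by decide)
      · intro h hh
        rcases h with _ | _ | _ | n
        · omega
        · decide
        · decide
        · rw [k5_eq n]
  · -- k ≥ 6
    have cA : ((Finset.Icc (0:ℤ) (k:ℤ)).erase 2).card = k := by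
      rw [Finset.card_erase_of_mem (by simp only [Finset.mem_Icc]; omega), Int.card_Icc]
      omega
    have cB : ((Finset.Icc (0:ℤ) (k:ℤ)).erase 3).card = k := by
      rw [Finset.card_erase_of_mem (by simp only [Finset.mem_Icc]; omega), Int.card_Icc]
      omega
    refine ⟨(Finset.Icc (0:ℤ) (k:ℤ)).erase 2, (Finset.Icc (0:ℤ) (k:ℤ)).erase 3, cA, cB, ?_, ?_⟩
    · apply not_affeq _ _ (k:ℤ) (by positivity)
      · simp only [Finset.mem_erase, Finset.mem_Icc]; omega
      · simp only [Finset.mem_erase, Finset.mem_Icc]; omega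
      · intro a ha; simp only [Finset.mem_erase, Finset.mem_Icc] at ha; exact ha.2
      · simp only [Finset.mem_erase, Finset.mem_Icc]; omega
      · simp only [Finset.mem_erase, Finset.mem_Icc]; omega
      · intro b hb; simp only [Finset.mem_erase, Finset.mem_Icc] at hb; exact hb.2
      · intro hEq
        have h2 : (2:ℤ) ∈ (Finset.Icc (0:ℤ) (k:ℤ)).erase 3 := by
          simp only [Finset.mem_erase, Finset.mem_Icc]; omega
        rw [hEq] at h2
        simp only [Finset.mem_erase, Finset.mem_Icc] at h2
        omega
      · intro hEq
        have h3 : (3:ℤ) ∈ ((Finset.Icc (0:ℤ) (k:ℤ)).erase 2).image (fun a => (k:ℤ) - a) :=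
          Finset.mem_image.mpr ⟨(k:ℤ)-3, by simp only [Finset.mem_erase, Finset.mem_Icc]; omega, by ring⟩
        rw [← hEq] at h3
        simp only [Finset.mem_erase, Finset.mem_Icc] at h3
        omega
    · intro h hh
      rcases h with _ | _ | n
      · omega
      · rw [hfold_one, hfold_one, cA, cB]
      · rw [descErase (k:ℤ) 2 (by omega) (by omega) n, descErase (k:ℤ) 3 (by omega) (by omega) n]
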